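/- Let N = m+n for positive integers m, n, let C = diag(𝟙ₘ, −𝟙ₙ) and 𝓔 = diag(ε₁,…,ε_N) with εₚ ∈ {+1,−1}. Let μ₁,…,μ_r be nonzero real numbers with |μ₁|,…,|μ_r| pairwise distinct, and let B₁,…,B_r ∈ M_N(ℂ). Define g(λ) = 𝟙 + Σ_{j=1}^r (λ/μ_j)(B_j/(λ−μ_j) + C B_j C/(λ+μ_j)) and ĝ(λ) = 𝓔 g(conj(λ))† 𝓔. If g(λ) ĝ(λ) = 𝟙 for every λ ∈ ℂ outside the pole set {±μ_j}, then B_i 𝓔 B_i† = 0 for every i = 1,…,r. -/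

import Mathlib

noncomputable section

open Matrix Filter

/-- The Cartan involution matrix `C = diag(𝟙ₘ, -𝟙ₙ)`. -/
def Cmat (m n : ℕ) : Matrix (Fin m ⊕ Fin n) (Fin m ⊕ Fin n) ℂ :=
  Matrix.fromBlocks 1 0 0 (-1)

/-- The signature matrix `𝓔 = diag(ε₁,…,ε_N)`. -/
def Emat {m n : ℕ} (ε : Fin m ⊕ Fin n → ℝ) : Matrix (Fin m ⊕ Fin n) (Fin m ⊕ Fin n) ℂ :=
  Matrix.diagonal fun p => (ε p : ℂ)

/-- Key limit computation: `e k • g(μᵢ + e k)` tends to the residue matrix `M i`. -/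
theorem aux_tendsto {I : Type*} [Fintype I] [DecidableEq I] {r : ℕ} (μ : Fin r → ℝ) (i : Fin r)
    (hμi : (μ i : ℂ) ≠ 0)
    (hsub : ∀ j, j ≠ i → (μ i : ℂ) - μ j ≠ 0)
    (hadd : ∀ j, (μ i : ℂ) + μ j ≠ 0)
    (M P : Fin r → Matrix I I ℂ)
    (e : ℕ → ℂ) (he0 : ∀ k, e k ≠ 0) (he : Tendsto e atTop (nhds 0)) :
    Tendsto (fun k => e k • ((1 : Matrix I I ℂ) + ∑ j, ((((μ i : ℂ) + e k)) / μ j) •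
        (((((μ i : ℂ) + e k)) - μ j)⁻¹ • M j + ((((μ i : ℂ) + e k)) + μ j)⁻¹ • P j)))
      atTop (nhds (M i)) := by
  have hf : Tendsto (fun k => (μ i : ℂ) + e k) atTop (nhds (μ i)) := by
    simpa using (tendsto_const_nhds (x := (μ i : ℂ))).add he
  have hfun : ∀ k, e k • ((1 : Matrix I I ℂ) + ∑ j, ((((μ i : ℂ) + e k)) / μ j) •
        (((((μ i : ℂ) + e k)) - μ j)⁻¹ • M j + ((((μ i : ℂ) + e k)) + μ j)⁻¹ • P j))
      = e k • (1 : Matrix I I ℂ) + ∑ j,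
        ((e k * ((((μ i : ℂ) + e k)) / μ j) * ((((μ i : ℂ) + e k)) - μ j)⁻¹) • M j
          + (e k * ((((μ i : ℂ) + e k)) / μ j) * ((((μ i : ℂ) + e k)) + μ j)⁻¹) • P j) := by
    intro k
    rw [smul_add, Finset.smul_sum]
    congr 1
    refine Finset.sum_congr rfl fun j _ => ?_
    rw [smul_smul, smul_add, smul_smul, smul_smul]
  simp only [hfun]
  have h0 : Tendsto (fun k => e k • (1 : Matrix I I ℂ)) atTop (nhds ((0 : ℂ) • (1 : Matrix I I ℂ))) :=
    he.smul_const 1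
  have hsum : Tendsto (fun k => ∑ j,
      ((e k * ((((μ i : ℂ) + e k)) / μ j) * ((((μ i : ℂ) + e k)) - μ j)⁻¹) • M j
        + (e k * ((((μ i : ℂ) + e k)) / μ j) * ((((μ i : ℂ) + e k)) + μ j)⁻¹) • P j))
      atTop (nhds (∑ j, if j = i then M i else 0)) := by
    refine tendsto_finset_sum _ fun j _ => ?_
    by_cases hj : j = i
    · subst hj
      rw [if_pos rfl]
      have hs1 : Tendsto (fun k => e k * ((((μ j : ℂ) + e k)) / μ j) * ((((μ j : ℂ) + e k)) - μ j)⁻¹)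
          atTop (nhds 1) := by
        have heq : (fun k => e k * ((((μ j : ℂ) + e k)) / μ j) * ((((μ j : ℂ) + e k)) - μ j)⁻¹)
            = fun k => (((μ j : ℂ) + e k)) / μ j := by
          funext k
          have h1 : ((μ j : ℂ) + e k) - μ j = e k := by ring
          rw [h1, mul_comm (e k), mul_assoc, mul_inv_cancel₀ (he0 k), mul_one]
        rw [heq]
        have := hf.div_const (μ j : ℂ)
        simpa [div_self hμi] using this
      have hs2 : Tendsto (fun k => e k * ((((μ j : ℂ) + e k)) / μ j) * ((((μ j : ℂ) + e k)) + μ j)⁻¹)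
          atTop (nhds 0) := by
        have := (he.mul (hf.div_const (μ j : ℂ))).mul ((hf.add_const (μ j : ℂ)).inv₀ (hadd j))
        simpa using this
      have := (hs1.smul_const (M j)).add (hs2.smul_const (P j))
      simpa using this
    · rw [if_neg hj]
      have hs1 : Tendsto (fun k => e k * ((((μ i : ℂ) + e k)) / μ j) * ((((μ i : ℂ) + e k)) - μ j)⁻¹)
          atTop (nhds 0) := by
        have := (he.mul (hf.div_const (μ j : ℂ))).mul ((hf.sub_const (μ j : ℂ)).inv₀ (hsub j hj))
        simpa using this
      have hs2 : Tendsto (fun k => e k * ((((μ i : ℂ) + e k)) / μ j) * ((((μ i : ℂ) + e k)) + μ j)⁻¹)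
          atTop (nhds 0) := by
        have := (he.mul (hf.div_const (μ j : ℂ))).mul ((hf.add_const (μ j : ℂ)).inv₀ (hadd j))
        simpa using this
      have := (hs1.smul_const (M j)).add (hs2.smul_const (P j))
      simpa using this
  have := h0.add hsum
  simpa [Finset.sum_ite_eq'] using this

/-- Degenerate case, real poles: if the dressing factor
`g(λ) = 𝟙 + Σⱼ (λ/μⱼ)(Bⱼ/(λ-μⱼ) + CBⱼC/(λ+μⱼ))` with nonzero real poles `±μⱼ` of
pairwise distinct absolute values satisfies `g(λ) 𝓔 g(λ*)† 𝓔 = 𝟙` away from the poles,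
then the double-pole coefficients give `Bᵢ 𝓔 Bᵢ† = 0`. -/
theorem real_pole_double_pole_relation {m n r : ℕ} (hm : 0 < m) (hn : 0 < n) (hr : 0 < r)
    (ε : Fin m ⊕ Fin n → ℝ) (hε : ∀ p, ε p = 1 ∨ ε p = -1)
    (μ : Fin r → ℝ) (hμ0 : ∀ j, μ j ≠ 0)
    (hdist : ∀ i j, |μ i| = |μ j| → i = j)
    (B : Fin r → Matrix (Fin m ⊕ Fin n) (Fin m ⊕ Fin n) ℂ)
    (g : ℂ → Matrix (Fin m ⊕ Fin n) (Fin m ⊕ Fin n) ℂ)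
    (hg : ∀ lam, g lam = 1 + ∑ j, (lam / (μ j : ℂ)) •
        ((lam - (μ j : ℂ))⁻¹ • B j + (lam + (μ j : ℂ))⁻¹ • (Cmat m n * B j * Cmat m n)))
    (hunit : ∀ lam : ℂ, (∀ j, lam ≠ (μ j : ℂ) ∧ lam ≠ -(μ j : ℂ)) →
      g lam * (Emat ε * (g (starRingEnd ℂ lam))ᴴ * Emat ε) = 1) :
    ∀ i, B i * Emat ε * (B i)ᴴ = 0 := by
  intro i
  classical
  set E := Emat ε with hE
  -- 𝓔² = 1
  have hEE : E * E = 1 := by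
    have hsq : ∀ p, (ε p : ℂ) * (ε p : ℂ) = 1 := by
      intro p; rcases hε p with h | h <;> rw [h] <;> norm_num
    simp [hE, Emat, Matrix.diagonal_mul_diagonal, hsq]
  -- nonvanishing facts about the poles
  have hμiC : (μ i : ℂ) ≠ 0 := Complex.ofReal_ne_zero.mpr (hμ0 i)
  have hsubR : ∀ j : Fin r, j ≠ i → μ i - μ j ≠ 0 := by
    intro j hj h
    exact hj ((hdist j i (by rw [sub_eq_zero] at h; rw [h])).symm ▸ rfl)
  have haddR : ∀ j : Fin r, μ i + μ j ≠ 0 := by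
    intro j h
    have habs : |μ i| = |μ j| := by
      have : μ j = -μ i := by linarith
      rw [this, abs_neg]
    have : i = j := hdist i j habs
    subst this
    exact hμ0 i (by linarith)
  have hsub : ∀ j : Fin r, j ≠ i → (μ i : ℂ) - μ j ≠ 0 := by
    intro j hj
    rw [← Complex.ofReal_sub]
    exact Complex.ofReal_ne_zero.mpr (hsubR j hj)
  have hadd : ∀ j : Fin r, (μ i : ℂ) + μ j ≠ 0 := by
    intro j
    rw [← Complex.ofReal_add]
    exact Complex.ofReal_ne_zero.mpr (haddR j)
  -- the real sequence approaching μ i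
  set t : ℕ → ℝ := fun k => ((k : ℝ) + 1)⁻¹ with ht
  have ht0 : ∀ k, t k ≠ 0 := by
    intro k
    exact inv_ne_zero (by positivity)
  have htlim : Tendsto t atTop (nhds 0) := by
    apply Tendsto.inv_tendsto_atTop
    exact tendsto_atTop_add_const_right _ 1 tendsto_natCast_atTop_atTop
  set e : ℕ → ℂ := fun k => ((t k : ℝ) : ℂ) with he'
  have he0 : ∀ k, e k ≠ 0 := fun k => Complex.ofReal_ne_zero.mpr (ht0 k)
  have he : Tendsto e atTop (nhds 0) := by
    have := (Complex.continuous_ofReal.tendsto 0).comp htlim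
    simpa [he', Function.comp_def] using this
  set f : ℕ → ℂ := fun k => (μ i : ℂ) + e k with hf'
  -- f k is real and conj-invariant
  have hfreal : ∀ k, f k = ((μ i + t k : ℝ) : ℂ) := by
    intro k; simp [hf', he', Complex.ofReal_add]
  have hconj : ∀ k, starRingEnd ℂ (f k) = f k := by
    intro k; rw [hfreal k, Complex.conj_ofReal]
  -- eventually f k avoids all poles
  have havoid : ∀ᶠ k in atTop, ∀ j, f k ≠ (μ j : ℂ) ∧ f k ≠ -(μ j : ℂ) := by
    rw [eventually_all]
    intro j
    have h1 : ∀ᶠ k in atTop, f k ≠ (μ j : ℂ) := by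
      by_cases hj : j = i
      · subst hj
        filter_upwards with k h
        have h' : (μ j : ℂ) + e k = μ j := h
        exact he0 k (by linear_combination h')
      · have hne : (0 : ℂ) ≠ (μ j : ℂ) - μ i := by
          intro h
          exact hsub j hj (by linear_combination h)
        filter_upwards [he.eventually_ne hne] with k hk h
        apply hk
        have h' : (μ i : ℂ) + e k = μ j := h
        linear_combination h'
    have h2 : ∀ᶠ k in atTop, f k ≠ -(μ j : ℂ) := by
      have hne : (0 : ℂ) ≠ -(μ j : ℂ) - μ i := by
        intro h
        apply hadd j
        linear_combination h
      filter_upwards [he.eventually_ne hne] with k hk h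
      apply hk
      have h' : (μ i : ℂ) + e k = -(μ j : ℂ) := h
      linear_combination h'
    filter_upwards [h1, h2] with k hk1 hk2
    exact ⟨hk1, hk2⟩
  -- the two factors and their limits
  have tH : Tendsto (fun k => e k • g (f k)) atTop (nhds (B i)) := by
    have := aux_tendsto μ i hμiC hsub hadd B (fun j => Cmat m n * B j * Cmat m n) e he0 he
    refine Tendsto.congr (fun k => ?_) this
    rw [hg (f k)]
  have hKform : ∀ k, E * (g (starRingEnd ℂ (f k)))ᴴ * E
      = 1 + ∑ j, ((f k) / (μ j : ℂ)) •
        (((f k) - (μ j : ℂ))⁻¹ • (E * (B j)ᴴ * E)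
          + ((f k) + (μ j : ℂ))⁻¹ • (E * (Cmat m n * B j * Cmat m n)ᴴ * E)) := by
    intro k
    rw [hconj k, hg (f k), hfreal k]
    push_cast
    simp only [conjTranspose_add, conjTranspose_one, Matrix.conjTranspose_sum,
      conjTranspose_smul, smul_add, star_smul]
    simp only [RCLike.star_def, map_div₀, map_inv₀, map_sub, map_add, Complex.conj_ofReal]
    simp only [mul_add, add_mul, Finset.mul_sum, Finset.sum_mul, mul_one, one_mul, hEE,
      mul_smul_comm, smul_mul_assoc, mul_assoc]
  have tK : Tendsto (fun k => e k • (E * (g (starRingEnd ℂ (f k)))ᴴ * E)) atTop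
      (nhds (E * (B i)ᴴ * E)) := by
    have := aux_tendsto μ i hμiC hsub hadd (fun j => E * (B j)ᴴ * E)
      (fun j => E * (Cmat m n * B j * Cmat m n)ᴴ * E) e he0 he
    refine Tendsto.congr (fun k => ?_) this
    rw [hKform k]
  have hprod : Tendsto (fun k => (e k • g (f k)) * (e k • (E * (g (starRingEnd ℂ (f k)))ᴴ * E)))
      atTop (nhds (B i * (E * (B i)ᴴ * E))) := tH.mul tK
  have hsq : Tendsto (fun k => (e k • g (f k)) * (e k • (E * (g (starRingEnd ℂ (f k)))ᴴ * E)))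
      atTop (nhds 0) := by
    have hz : Tendsto (fun k => (e k * e k) • (1 : Matrix (Fin m ⊕ Fin n) (Fin m ⊕ Fin n) ℂ))
        atTop (nhds 0) := by
      have := (he.mul he).smul_const (1 : Matrix (Fin m ⊕ Fin n) (Fin m ⊕ Fin n) ℂ)
      simpa using this
    refine Tendsto.congr' ?_ hz
    filter_upwards [havoid] with k hk
    rw [smul_mul_assoc, mul_smul_comm, smul_smul, hunit (f k) hk]
  have hBE : B i * (E * (B i)ᴴ * E) = 0 := tendsto_nhds_unique hprod hsq
  have h3 : B i * (E * (B i)ᴴ * E) * E = 0 := by rw [hBE, zero_mul]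
  calc B i * E * (B i)ᴴ = B i * (E * (B i)ᴴ * E) * E := by
        simp only [mul_assoc, hEE, mul_one]
    _ = 0 := h3
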